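/- If a finite group G belongs to C₃ (i.e. ∑_{H ⊴ G} |H| ≤ 2|G|), then the abelianization G/[G,G] is cyclic and its order n satisfies σ(n) ≤ 2n. -/

import Mathlib

/-- The sum of the orders of all normal subgroups of `G`. -/
noncomputable def normalSum (G : Type*) [Group G] : ℕ :=
  ∑ᶠ (H : Subgroup G) (_ : H.Normal), Nat.card H


lemma isCyclic_of_sum_card_le (A : Type*) [Group A] [Fintype A]
    (h : ∑ K : Subgroup A, Nat.card K ≤ 2 * Nat.card A) : IsCyclic A := by
  classical
  by_contra hnc
  have hnt : Nontrivial A := Nontrivial.of_not_isCyclic hnc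
  obtain ⟨x, hx1⟩ := exists_ne (1 : A)
  have hgen : ∀ a : A, Subgroup.zpowers a ≠ ⊤ := by
    intro a ha
    have : ∀ y : A, y ∈ Subgroup.zpowers a := fun y => ha.symm ▸ Subgroup.mem_top y
    exact hnc ⟨a, this⟩
  set n := Nat.card A with hn
  set K₀ := Subgroup.zpowers x with hK₀
  have hK₀top : K₀ ≠ ⊤ := hgen x
  have hK₀bot : K₀ ≠ ⊥ := by
    simp only [hK₀, ne_eq, Subgroup.zpowers_eq_bot]
    exact hx1
  set U : Finset (Subgroup A) := Finset.univ with hU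
  have cardK : ∀ K : Subgroup A,
      Nat.card K = (Finset.univ.filter (fun a => a ∈ K)).card := by
    intro K
    rw [Nat.card_eq_fintype_card, Fintype.card_subtype]
  have htot : ∑ K ∈ U, (Finset.univ.filter (fun a => Subgroup.zpowers a = K)).card = n := by
    rw [hn, Nat.card_eq_fintype_card, ← Finset.card_univ]
    exact (Finset.card_eq_sum_card_fiberwise (f := fun a => Subgroup.zpowers a)
      (fun a _ => Finset.mem_univ _)).symm
  have hfibtop : (Finset.univ.filter
      (fun a => Subgroup.zpowers a = (⊤ : Subgroup A))).card = 0 := by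
    simp only [Finset.card_eq_zero, Finset.filter_eq_empty_iff]
    exact fun a _ => hgen a
  have hfible : ∀ K : Subgroup A,
      (Finset.univ.filter (fun a => Subgroup.zpowers a = K)).card ≤ Nat.card K := by
    intro K
    rw [cardK]
    apply Finset.card_le_card
    intro a ha
    simp only [Finset.mem_filter, Finset.mem_univ, true_and] at ha ⊢
    exact ha ▸ Subgroup.mem_zpowers a
  have hfibK₀ : (Finset.univ.filter (fun a => Subgroup.zpowers a = K₀)).card + 1
      ≤ Nat.card K₀ := by
    rw [cardK]
    have h1 : (1 : A) ∈ Finset.univ.filter (fun a => a ∈ K₀) := by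
      simp [Subgroup.one_mem]
    have hsub : Finset.univ.filter (fun a => Subgroup.zpowers a = K₀)
        ⊆ (Finset.univ.filter (fun a => a ∈ K₀)).erase 1 := by
      intro a ha
      simp only [Finset.mem_filter, Finset.mem_univ, true_and] at ha
      refine Finset.mem_erase.mpr ⟨?_, ?_⟩
      · rintro rfl
        rw [Subgroup.zpowers_one_eq_bot] at ha
        exact hK₀bot ha.symm
      · simp only [Finset.mem_filter, Finset.mem_univ, true_and]
        exact ha ▸ Subgroup.mem_zpowers a
    have h2 := Finset.card_le_card hsub
    rw [Finset.card_erase_of_mem h1] at h2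
    have hpos : 0 < (Finset.univ.filter (fun a => a ∈ K₀)).card :=
      Finset.card_pos.mpr ⟨1, h1⟩
    omega
  have hTmem : (⊤ : Subgroup A) ∈ U := Finset.mem_univ _
  have hK₀mem : K₀ ∈ U.erase ⊤ := Finset.mem_erase.mpr ⟨hK₀top, Finset.mem_univ _⟩
  have e1 := (Finset.add_sum_erase U (fun K : Subgroup A => Nat.card K) hTmem).symm
  have e1' := (Finset.add_sum_erase U
      (fun K : Subgroup A => (Finset.univ.filter (fun a => Subgroup.zpowers a = K)).card)
      hTmem).symm
  have e2 := (Finset.add_sum_erase (U.erase ⊤) (fun K : Subgroup A => Nat.card K) hK₀mem).symm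
  have e2' := (Finset.add_sum_erase (U.erase ⊤)
      (fun K : Subgroup A => (Finset.univ.filter (fun a => Subgroup.zpowers a = K)).card)
      hK₀mem).symm
  have e3 : ∑ K ∈ (U.erase ⊤).erase K₀,
        (Finset.univ.filter (fun a => Subgroup.zpowers a = K)).card
      ≤ ∑ K ∈ (U.erase ⊤).erase K₀, Nat.card K :=
    Finset.sum_le_sum fun K _ => hfible K
  have e6 : Nat.card (⊤ : Subgroup A) = n := Subgroup.card_top
  have hfinal : ∑ K ∈ U, Nat.card K ≤ 2 * n := h
  omega

lemma sigma_le_of_sum_card_le (A : Type*) [Group A] [Fintype A] [IsCyclic A]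
    (h : ∑ K : Subgroup A, Nat.card K ≤ 2 * Nat.card A) :
    (∑ d ∈ (Nat.card A).divisors, d) ≤ 2 * Nat.card A := by
  classical
  obtain ⟨g, hg⟩ := IsCyclic.exists_ofOrder_eq_natCard (α := A)
  set n := Nat.card A with hn
  have hn0 : n ≠ 0 := Nat.card_pos.ne'
  set f : ℕ → Subgroup A := fun d => Subgroup.zpowers (g ^ (n / d)) with hf
  have hcard : ∀ d ∈ n.divisors, Nat.card (f d) = d := by
    intro d hd
    obtain ⟨hdvd, -⟩ := Nat.mem_divisors.mp hd
    have hnd : n / d ≠ 0 := Nat.div_ne_zero_iff.mpr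
      ⟨(Nat.pos_of_mem_divisors hd).ne', Nat.le_of_dvd (Nat.pos_of_ne_zero hn0) hdvd⟩
    rw [hf, Nat.card_zpowers, orderOf_pow' _ hnd, hg,
      Nat.gcd_eq_right (Nat.div_dvd_of_dvd hdvd), Nat.div_div_self hdvd hn0]
  calc (∑ d ∈ n.divisors, d) = ∑ d ∈ n.divisors, Nat.card (f d) :=
        (Finset.sum_congr rfl fun d hd => (hcard d hd).symm)
    _ = ∑ K ∈ n.divisors.image f, Nat.card K := by
        rw [Finset.sum_image]
        intro a ha b hb hab
        rw [← hcard a ha, ← hcard b hb, hab]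
    _ ≤ ∑ K : Subgroup A, Nat.card K :=
        Finset.sum_le_sum_of_subset (Finset.subset_univ _)
    _ ≤ 2 * n := h

theorem abelianization_of_mem_C3 (G : Type*) [Group G] [Finite G]
    (h : normalSum G ≤ 2 * Nat.card G) :
    IsCyclic (Abelianization G) ∧
      (∑ d ∈ (Nat.card (Abelianization G)).divisors, d) ≤ 2 * Nat.card (Abelianization G) := by
  classical
  have : Fintype G := Fintype.ofFinite G
  have : Fintype (Abelianization G) := Fintype.ofFinite _
  set A := Abelianization G with hA
  set φ := (Abelianization.of : G →* A) with hφ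
  have hsurj : Function.Surjective φ := fun y =>
    Quotient.inductionOn' y fun g => ⟨g, rfl⟩
  set c := Nat.card (MonoidHom.ker φ) with hc
  have hc0 : 0 < c := Nat.card_pos
  -- card G = card A * c
  have hG : Nat.card G = Nat.card A * c := by
    have h1 := Subgroup.card_mul_index (MonoidHom.ker φ)
    have h2 : (MonoidHom.ker φ).index = Nat.card φ.range := Subgroup.index_ker φ
    rw [φ.range_eq_top_of_surjective hsurj, Subgroup.card_top] at h2
    rw [← h1, h2, mul_comm]
  -- card of comap
  have hcomap : ∀ K : Subgroup A, Nat.card (K.comap φ) = Nat.card K * c := by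
    intro K
    have hidx : (K.comap φ).index = K.index := Subgroup.index_comap_of_surjective K hsurj
    have h1 : Nat.card (K.comap φ) * K.index = Nat.card G := by
      rw [← hidx]; exact Subgroup.card_mul_index _
    have h2 : Nat.card K * K.index = Nat.card A := Subgroup.card_mul_index K
    have hKidx : K.index ≠ 0 := by
      intro h0
      rw [h0, mul_zero] at h2
      exact Nat.card_pos.ne' h2.symm
    have : Nat.card (K.comap φ) * K.index = (Nat.card K * c) * K.index := by
      rw [h1, hG, ← h2]; ring
    exact Nat.eq_of_mul_eq_mul_right (Nat.pos_of_ne_zero hKidx) this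
  -- normalSum as finset sum
  have hns : normalSum G = ∑ H ∈ Finset.univ.filter (fun H : Subgroup G => H.Normal),
      Nat.card H := by
    rw [normalSum, finsum_eq_sum_of_fintype, Finset.sum_filter]
    congr 1
    funext H
    rw [finsum_eq_if]
  -- pull back subgroups of A
  have hinj : Function.Injective (fun K : Subgroup A => K.comap φ) :=
    Subgroup.comap_injective hsurj
  have hsum : (∑ K : Subgroup A, Nat.card K) * c ≤ normalSum G := by
    rw [hns, Finset.sum_mul]
    calc (∑ K : Subgroup A, Nat.card K * c)
        = ∑ K : Subgroup A, Nat.card (K.comap φ) := by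
          exact Finset.sum_congr rfl fun K _ => (hcomap K).symm
      _ = ∑ H ∈ Finset.univ.image (fun K : Subgroup A => K.comap φ), Nat.card H := by
          rw [Finset.sum_image (fun a _ b _ hab => hinj hab)]
      _ ≤ ∑ H ∈ Finset.univ.filter (fun H : Subgroup G => H.Normal), Nat.card H := by
          apply Finset.sum_le_sum_of_subset
          intro H hH
          simp only [Finset.mem_image, Finset.mem_univ, true_and] at hH
          obtain ⟨K, rfl⟩ := hH
          simp only [Finset.mem_filter, Finset.mem_univ, true_and]
          exact Subgroup.Normal.comap inferInstance φ
  have hA2 : ∑ K : Subgroup A, Nat.card K ≤ 2 * Nat.card A := by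
    have : (∑ K : Subgroup A, Nat.card K) * c ≤ (2 * Nat.card A) * c := by
      calc (∑ K : Subgroup A, Nat.card K) * c ≤ normalSum G := hsum
        _ ≤ 2 * Nat.card G := h
        _ = (2 * Nat.card A) * c := by rw [hG]; ring
    exact Nat.le_of_mul_le_mul_right this hc0
  have hcyc : IsCyclic A := isCyclic_of_sum_card_le A hA2
  exact ⟨hcyc, sigma_le_of_sum_card_le A hA2⟩
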